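/- Fix an integer N ≥ 1, reals σh², σw² > 0, and P_F, P_D ∈ (0,1). Define α_F = P_F·σh²/(P_F·σh² + σw²·N) and α_D = P_D·σh²/(P_D·σh² + σw²·N). For each integer K ≥ 1 define the probability measure ν_K^{(0)} on ℝ^{2N} as the Gaussian mixture ν_K^{(0)} = Σ_{ℓ=0}^{K} C(K,ℓ)·P_F^ℓ·(1−P_F)^{K−ℓ} · Π_{i=1}^{2N} 𝒩(0, u_ℓ), where u_ℓ = (ℓ·σh²/(K·N) + σw²)/(2·P_F·σh²), and similarly ν_K^{(1)} with mixing weights C(K,ℓ)·P_D^ℓ·(1−P_D)^{K−ℓ} and the same variances u_ℓ. Then, as K → ∞, ν_K^{(0)} converges weakly to Π_{i=1}^{2N} 𝒩(0, 1/(2·N·α_F)), and ν_K^{(1)} converges weakly to Π_{i=1}^{2N} 𝒩(0, P_D/(2·P_F·N·α_D)). -/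

import Mathlib

open MeasureTheory ProbabilityTheory Filter

open scoped unitInterval

noncomputable section StmtAux

namespace StmtAux

/-- Product of standard gaussians. -/
def stdPi (n : ℕ) : Measure (Fin n → ℝ) := Measure.pi (fun _ => gaussianReal 0 1)

instance (n : ℕ) : IsProbabilityMeasure (stdPi n) := by unfold stdPi; infer_instance

lemma pi_gauss_eq_map (n : ℕ) {v : ℝ} (hv : 0 ≤ v) :
    Measure.pi (fun _ : Fin n => gaussianReal 0 v.toNNReal) =
      Measure.map (fun x (i : Fin n) => Real.sqrt v * x i) (stdPi n) := by
  have hv' : (⟨Real.sqrt v ^ 2, sq_nonneg _⟩ : NNReal) = v.toNNReal := by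
    ext
    simp [Real.sq_sqrt hv, Real.coe_toNNReal _ hv]
  have h : MeasurePreserving (fun y : ℝ => Real.sqrt v * y)
      (gaussianReal 0 1) (gaussianReal 0 v.toNNReal) := by
    refine ⟨measurable_const_mul _, ?_⟩
    rw [show (fun y : ℝ => Real.sqrt v * y) = (Real.sqrt v * ·) from rfl,
      gaussianReal_map_const_mul, mul_zero, mul_one]
    congr 1
  exact ((measurePreserving_pi _ _ (fun _ : Fin n => h)).map_eq).symm

lemma integral_pi_gauss {n : ℕ} (f : BoundedContinuousFunction (Fin n → ℝ) ℝ) {v : ℝ}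
    (hv : 0 ≤ v) :
    ∫ x, f x ∂(Measure.pi (fun _ : Fin n => gaussianReal 0 v.toNNReal)) =
      ∫ x, f (fun i => Real.sqrt v * x i) ∂(stdPi n) := by
  rw [pi_gauss_eq_map n hv]
  exact integral_map
    (Measurable.aemeasurable
      (measurable_pi_lambda _ fun i => (measurable_pi_apply i).const_mul _))
    f.continuous.aestronglyMeasurable

lemma continuous_G {n : ℕ} (f : BoundedContinuousFunction (Fin n → ℝ) ℝ) {c : ℝ → ℝ}
    (hc : Continuous c) :
    Continuous (fun t => ∫ x, f (fun i => c t * x i) ∂(stdPi n)) := by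
  apply continuous_of_dominated (bound := fun _ => ‖f‖)
  · intro t
    exact (f.continuous.comp
      (continuous_pi fun i => continuous_const.mul (continuous_apply i))).aestronglyMeasurable
  · intro t
    exact Filter.Eventually.of_forall fun x => f.norm_coe_le_norm _
  · exact integrable_const _
  · exact Filter.Eventually.of_forall fun x =>
      f.continuous.comp (continuous_pi fun i => (hc.comp continuous_id).mul continuous_const)

lemma key (N : ℕ) (hN : 1 ≤ N) (σh2 σw2 : ℝ) (hσh : 0 < σh2) (hσw : 0 < σw2)
    (PF : ℝ) (hPF0 : 0 < PF) (p : ℝ) (hp : p ∈ Set.Ioo (0 : ℝ) 1)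
    (u : ℕ → ℕ → ℝ)
    (hu : ∀ K ℓ, u K ℓ = (ℓ * σh2 / (K * N) + σw2) / (2 * PF * σh2))
    (ν : ℕ → Measure (Fin (2 * N) → ℝ))
    (hν : ∀ K, ν K = ∑ ℓ ∈ Finset.range (K + 1),
        (ENNReal.ofReal ((K.choose ℓ : ℝ) * p ^ ℓ * (1 - p) ^ (K - ℓ))) •
          Measure.pi (fun _ : Fin (2 * N) => gaussianReal 0 (u K ℓ).toNNReal))
    (f : BoundedContinuousFunction (Fin (2 * N) → ℝ) ℝ) :
    Tendsto (fun K : ℕ => ∫ x, f x ∂(ν K)) atTop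
      (nhds (∫ x, f x ∂(Measure.pi (fun _ : Fin (2 * N) =>
        gaussianReal 0 ((p * σh2 / N + σw2) / (2 * PF * σh2)).toNNReal)))) := by
  have hNpos : (0 : ℝ) < N := by exact_mod_cast hN
  have hc2 : (0 : ℝ) < 2 * PF * σh2 := by positivity
  set V : ℝ → ℝ := fun t => (t * σh2 / N + σw2) / (2 * PF * σh2) with hV
  have hVnn : ∀ t : ℝ, 0 ≤ t → 0 ≤ V t := fun t ht =>
    div_nonneg (add_nonneg (div_nonneg (mul_nonneg ht hσh.le) hNpos.le) hσw.le) hc2.le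
  have hVcont : Continuous V := by
    apply Continuous.div_const
    exact ((continuous_id.mul continuous_const).div_const _).add continuous_const
  set G : ℝ → ℝ := fun t => ∫ x, f (fun i => Real.sqrt (V t) * x i) ∂(stdPi (2 * N)) with hGdef
  have hGcont : Continuous G := continuous_G f (Real.continuous_sqrt.comp hVcont)
  have hG : ∀ t : ℝ, 0 ≤ t →
      (∫ x, f x ∂(Measure.pi (fun _ : Fin (2 * N) => gaussianReal 0 (V t).toNNReal))) = G t :=
    fun t ht => integral_pi_gauss f (hVnn t ht)
  set h : C(I, ℝ) := ⟨fun t => G t, hGcont.comp continuous_subtype_val⟩ with hh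
  have hp01 : p ∈ I := ⟨hp.1.le, hp.2.le⟩
  -- identification with Bernstein approximations
  have keyeq : ∀ K : ℕ, 1 ≤ K →
      (∫ x, f x ∂(ν K)) = bernsteinApproximation K h ⟨p, hp01⟩ := by
    intro K hK
    have hK0 : (K : ℝ) ≠ 0 := Nat.cast_ne_zero.mpr (by omega)
    have hwpos : ∀ ℓ ∈ Finset.range (K + 1),
        0 < (K.choose ℓ : ℝ) * p ^ ℓ * (1 - p) ^ (K - ℓ) := by
      intro ℓ hℓ
      have h1 : 0 < (K.choose ℓ : ℝ) := by
        exact_mod_cast Nat.choose_pos (Nat.lt_succ_iff.mp (Finset.mem_range.mp hℓ))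
      have h2 : (0 : ℝ) < 1 - p := by linarith [hp.2]
      exact mul_pos (mul_pos h1 (pow_pos hp.1 ℓ)) (pow_pos h2 _)
    have hint : ∀ ℓ ∈ Finset.range (K + 1),
        Integrable f ((ENNReal.ofReal ((K.choose ℓ : ℝ) * p ^ ℓ * (1 - p) ^ (K - ℓ))) •
          Measure.pi (fun _ : Fin (2 * N) => gaussianReal 0 (u K ℓ).toNNReal)) := by
      intro ℓ hℓ
      rw [integrable_smul_measure (ENNReal.ofReal_pos.mpr (hwpos ℓ hℓ)).ne'
        ENNReal.ofReal_ne_top]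
      exact f.integrable _
    rw [hν K, integral_finset_sum_measure hint, bernsteinApproximation.apply]
    have hR : (∑ k : Fin (K + 1), bernstein K k (⟨p, hp01⟩ : I) • h (bernstein.z k))
        = ∑ ℓ ∈ Finset.range (K + 1),
            G ((ℓ : ℝ) / K) * ((K.choose ℓ : ℝ) * p ^ ℓ * (1 - p) ^ (K - ℓ)) := by
      rw [Finset.sum_range]
      refine Finset.sum_congr rfl fun k _ => ?_
      rw [bernstein_apply, smul_eq_mul]
      exact mul_comm _ _
    rw [hR]
    refine Finset.sum_congr rfl fun ℓ hℓ => ?_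
    have huV : u K ℓ = V ((ℓ : ℝ) / K) := by
      rw [hu, hV]
      congr 1
      rw [div_mul_eq_mul_div, div_div]
    rw [integral_smul_measure, ENNReal.toReal_ofReal (hwpos ℓ hℓ).le, huV,
      hG ((ℓ : ℝ) / K) (by positivity), smul_eq_mul, mul_comm]
  have tendstoB : Tendsto (fun K : ℕ => bernsteinApproximation K h ⟨p, hp01⟩) atTop
      (nhds (h ⟨p, hp01⟩)) :=
    ((continuous_eval_const (⟨p, hp01⟩ : I)).tendsto h).comp
      (bernsteinApproximation_uniform h)
  have hlim : h ⟨p, hp01⟩ =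
      ∫ x, f x ∂(Measure.pi (fun _ : Fin (2 * N) =>
        gaussianReal 0 ((p * σh2 / N + σw2) / (2 * PF * σh2)).toNNReal)) := by
    have := hG p hp.1.le
    simp only [hh, ContinuousMap.coe_mk]
    exact this.symm
  rw [← hlim]
  refine tendstoB.congr' ?_
  filter_upwards [eventually_ge_atTop 1] with K hK using (keyeq K hK).symm

end StmtAux

end StmtAux

/-- Theorem 4 (TPC case): the Gaussian-mixture laws of the normalized received
vector under a total power constraint converge weakly, as `K → ∞`, to the
product Gaussian laws `Π 𝒩(0, 1/(2 N α_F))` under `H₀` and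
`Π 𝒩(0, P_D/(2 P_F N α_D))` under `H₁`. -/
theorem stmt_9 (N : ℕ) (hN : 1 ≤ N) (σh2 σw2 : ℝ) (hσh : 0 < σh2) (hσw : 0 < σw2)
    (PF PD : ℝ) (hPF : PF ∈ Set.Ioo (0 : ℝ) 1) (hPD : PD ∈ Set.Ioo (0 : ℝ) 1)
    (αF αD : ℝ)
    (hαF : αF = PF * σh2 / (PF * σh2 + σw2 * N))
    (hαD : αD = PD * σh2 / (PD * σh2 + σw2 * N))
    (u : ℕ → ℕ → ℝ)
    (hu : ∀ K ℓ, u K ℓ = (ℓ * σh2 / (K * N) + σw2) / (2 * PF * σh2))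
    (ν0 ν1 : ℕ → Measure (Fin (2 * N) → ℝ))
    (hν0 : ∀ K, ν0 K = ∑ ℓ ∈ Finset.range (K + 1),
        (ENNReal.ofReal ((K.choose ℓ : ℝ) * PF ^ ℓ * (1 - PF) ^ (K - ℓ))) •
          Measure.pi (fun _ : Fin (2 * N) => gaussianReal 0 (u K ℓ).toNNReal))
    (hν1 : ∀ K, ν1 K = ∑ ℓ ∈ Finset.range (K + 1),
        (ENNReal.ofReal ((K.choose ℓ : ℝ) * PD ^ ℓ * (1 - PD) ^ (K - ℓ))) •
          Measure.pi (fun _ : Fin (2 * N) => gaussianReal 0 (u K ℓ).toNNReal)) :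
    (∀ f : BoundedContinuousFunction (Fin (2 * N) → ℝ) ℝ,
        Tendsto (fun K : ℕ => ∫ x, f x ∂(ν0 K)) atTop
          (nhds (∫ x, f x ∂(Measure.pi (fun _ : Fin (2 * N) =>
            gaussianReal 0 (Real.toNNReal (1 / (2 * N * αF)))))))) ∧
    (∀ f : BoundedContinuousFunction (Fin (2 * N) → ℝ) ℝ,
        Tendsto (fun K : ℕ => ∫ x, f x ∂(ν1 K)) atTop
          (nhds (∫ x, f x ∂(Measure.pi (fun _ : Fin (2 * N) =>
            gaussianReal 0 (Real.toNNReal (PD / (2 * PF * N * αD)))))))) := by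
  have hNpos : (0 : ℝ) < N := by exact_mod_cast hN
  constructor
  · intro f
    have h1 : 1 / (2 * (N : ℝ) * αF) = (PF * σh2 / N + σw2) / (2 * PF * σh2) := by
      rw [hαF]
      have hPFpos : 0 < PF := hPF.1
      have hPF0 : PF ≠ 0 := hPF.1.ne'
      have hσh0 : σh2 ≠ 0 := hσh.ne'
      have hN0 : (N : ℝ) ≠ 0 := hNpos.ne'
      have hden : PF * σh2 + σw2 * (N : ℝ) ≠ 0 :=
        (add_pos (mul_pos hPF.1 hσh) (mul_pos hσw hNpos)).ne'
      rw [div_eq_div_iff (by positivity) (by positivity)]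
      field_simp
    rw [h1]
    exact StmtAux.key N hN σh2 σw2 hσh hσw PF hPF.1 PF hPF u hu ν0 hν0 f
  · intro f
    have h1 : PD / (2 * PF * (N : ℝ) * αD) = (PD * σh2 / N + σw2) / (2 * PF * σh2) := by
      rw [hαD]
      have hPF0 : PF ≠ 0 := hPF.1.ne'
      have hPD0 : PD ≠ 0 := hPD.1.ne'
      have hσh0 : σh2 ≠ 0 := hσh.ne'
      have hN0 : (N : ℝ) ≠ 0 := hNpos.ne'
      have hden : PD * σh2 + σw2 * (N : ℝ) ≠ 0 :=
        (add_pos (mul_pos hPD.1 hσh) (mul_pos hσw hNpos)).ne'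
      rw [div_eq_div_iff (by positivity) (by positivity)]
      field_simp
      exact (div_self (by rw [mul_comm (N : ℝ)]; exact hden)).symm
    rw [h1]
    exact StmtAux.key N hN σh2 σw2 hσh hσw PF hPF.1 PD hPD u hu ν1 hν1 f
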